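/- Let φ, φ' be unit vectors in ℂ^d, let δ ≥ 0, and let N_{(i,x)} for i, x ∈ {0,1} be positive semidefinite d×d matrices with Σ_{i,x∈{0,1}} N_{(i,x)} = I. Assume that for each x ∈ {0,1} the product of quadratic forms satisfies ⟨φ, N_{(1,x)} φ⟩ · ⟨φ', N_{(1,x)} φ'⟩ ≤ δ/2. For i ∈ {0,1} define the 2×2 matrix ρ^{(i)} with diagonal entries ρ^{(i)}₀₀ = ρ^{(i)}₁₁ = 1/2, off-diagonal entry ρ^{(i)}₀₁ = Σ_{x∈{0,1}} ⟨φ', N_{(i,x)} φ⟩ and ρ^{(i)}₁₀ its complex conjugate. Then Δ(ρ^{(0)}, ρ^{(1)}) ≥ |⟨φ', φ⟩| − 2√(2δ). -/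

import Mathlib

open Matrix Kronecker ComplexOrder

/-- The positive semidefinite square root, as `Matrix.PosSemidef.sqrt` was defined in the older
Mathlib (removed since). -/
noncomputable def Matrix.PosSemidef.sqrt {n : Type*} [Fintype n] [DecidableEq n]
    {A : Matrix n n ℂ} (hA : A.PosSemidef) : Matrix n n ℂ :=
  hA.1.eigenvectorUnitary.1 * diagonal ((↑) ∘ (hA.1.eigenvalues · |>.sqrt)) *
    (star hA.1.eigenvectorUnitary : Matrix n n ℂ)

/-- The trace norm `‖A‖₁ = Tr √(Aᴴ A)` of a complex matrix. -/
noncomputable def traceNorm {n : Type*} [Fintype n] [DecidableEq n] (A : Matrix n n ℂ) : ℝ :=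
  ((Matrix.posSemidef_conjTranspose_mul_self A).sqrt.trace).re

/-- The trace distance `Δ(ρ,σ) = ‖ρ - σ‖₁ / 2`. -/
noncomputable def traceDist {n : Type*} [Fintype n] [DecidableEq n] (ρ σ : Matrix n n ℂ) : ℝ :=
  traceNorm (ρ - σ) / 2

open scoped Classical in
/-- Positive semidefinite square root (junk value `0` on non-PSD matrices). -/
noncomputable def psdSqrt {n : Type*} [Fintype n] [DecidableEq n] (A : Matrix n n ℂ) :
    Matrix n n ℂ :=
  if h : A.PosSemidef then h.sqrt else 0

/-- The fidelity `F(ρ,σ) = ‖√ρ √σ‖₁`. -/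
noncomputable def fidelity {n : Type*} [Fintype n] [DecidableEq n] (ρ σ : Matrix n n ℂ) : ℝ :=
  traceNorm (psdSqrt ρ * psdSqrt σ)

/-- A density matrix: positive semidefinite with trace 1. -/
def IsDensityMatrix {n : Type*} [Fintype n] [DecidableEq n] (ρ : Matrix n n ℂ) : Prop :=
  ρ.PosSemidef ∧ ρ.trace = 1

/-- The projector `|b⟩⟨b|` on ℂ². -/
noncomputable def proj (b : Bool) : Matrix Bool Bool ℂ := Matrix.single b b 1

/-- The strong oblivious transfer channel `F_{(x₀,x₁)}`. -/
noncomputable def sotChannel (x₀ x₁ : Bool) (ρ : Matrix (Bool × Bool) (Bool × Bool) ℂ) :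
    Matrix (Bool × Bool) (Bool × Bool) ℂ :=
  ∑ i : Bool, ∑ i' : Bool,
    ρ (i, i') (i, i') •
      (((1/2 : ℂ) • (1 : Matrix Bool Bool ℂ)) ⊗ₖ proj (xor (bif xor i i' then x₁ else x₀) i'))

lemma traceNorm_aux (c : ℂ) :
    ∀ (h : ((!![0, c; (starRingEnd ℂ) c, 0] : Matrix (Fin 2) (Fin 2) ℂ))ᴴ *
        !![0, c; (starRingEnd ℂ) c, 0] |>.PosSemidef),
      h.sqrt = (‖c‖ : ℂ) • 1 := by
  intro h
  have hA : (!![0, c; (starRingEnd ℂ) c, 0] : Matrix (Fin 2) (Fin 2) ℂ)ᴴ *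
      !![0, c; (starRingEnd ℂ) c, 0] = ((‖c‖ ^ 2 : ℝ) : ℂ) • 1 := by
    have hct : (!![0, c; (starRingEnd ℂ) c, 0] : Matrix (Fin 2) (Fin 2) ℂ)ᴴ =
        !![0, c; (starRingEnd ℂ) c, 0] := by
      ext i j; fin_cases i <;> fin_cases j <;> simp [conjTranspose_apply]
    rw [hct, ← Complex.normSq_eq_norm_sq, Complex.normSq_eq_conj_mul_self, mul_fin_two]
    ext i j
    fin_cases i <;> fin_cases j <;>
      simp [Matrix.smul_apply, Matrix.one_apply, mul_comm]
  have hD := h.1.conjStarAlgAut_star_eigenvectorUnitary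
  simp only [Unitary.conjStarAlgAut_star_apply, hA, mul_smul_comm, smul_mul_assoc, mul_one,
    Unitary.coe_star_mul_self] at hD
  have hev : ∀ i, h.1.eigenvalues i = ‖c‖ ^ 2 := by
    intro i
    have := congrFun (congrFun hD i) i
    simp [Matrix.smul_apply] at this
    exact_mod_cast this.symm
  unfold Matrix.PosSemidef.sqrt
  have hdiag : diagonal ((↑) ∘ (h.1.eigenvalues · |>.sqrt)) =
      ((‖c‖ : ℝ) : ℂ) • (1 : Matrix (Fin 2) (Fin 2) ℂ) := by
    rw [smul_one_eq_diagonal]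
    congr 1
    funext i
    simp [hev i, Real.sqrt_sq (norm_nonneg c)]
  rw [hdiag, mul_smul_comm, smul_mul_assoc, mul_one, ← Unitary.coe_star,
    Unitary.coe_mul_star_self]

lemma traceNorm_offdiag (c : ℂ) :
    traceNorm !![0, c; (starRingEnd ℂ) c, 0] = 2 * ‖c‖ := by
  unfold traceNorm
  rw [traceNorm_aux c _, Matrix.trace_smul, Matrix.trace_one]
  simp
  ring

lemma cs_psd {d : ℕ} (N : Matrix (Fin d) (Fin d) ℂ) (hN : N.PosSemidef) (u v : Fin d → ℂ) :
    ‖star u ⬝ᵥ N.mulVec v‖ ≤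
      Real.sqrt ((star v ⬝ᵥ N.mulVec v).re * (star u ⬝ᵥ N.mulVec u).re) := by
  obtain ⟨A, rfl⟩ : ∃ A : Matrix (Fin d) (Fin d) ℂ, N = Aᴴ * A := by
    open scoped MatrixOrder in
    exact CStarAlgebra.nonneg_iff_eq_star_mul_self.mp hN.nonneg
  have key : ∀ w z : Fin d → ℂ, star w ⬝ᵥ (Aᴴ * A).mulVec z =
      star (A.mulVec w) ⬝ᵥ (A.mulVec z) := by
    intro w z
    rw [← Matrix.mulVec_mulVec, Matrix.dotProduct_mulVec, Matrix.star_mulVec]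
  simp only [key]
  set x : EuclideanSpace ℂ (Fin d) := WithLp.toLp 2 (A.mulVec u)
  set y : EuclideanSpace ℂ (Fin d) := WithLp.toLp 2 (A.mulVec v)
  have h1 : star (A.mulVec u) ⬝ᵥ A.mulVec v = inner ℂ x y := by
    rw [EuclideanSpace.inner_toLp_toLp, dotProduct_comm]
  have h2 : star (A.mulVec u) ⬝ᵥ A.mulVec u = inner ℂ x x := by
    rw [EuclideanSpace.inner_toLp_toLp, dotProduct_comm]
  have h3 : star (A.mulVec v) ⬝ᵥ A.mulVec v = inner ℂ y y := by
    rw [EuclideanSpace.inner_toLp_toLp, dotProduct_comm]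
  rw [h1, h2, h3, ← RCLike.re_to_complex, ← RCLike.re_to_complex,
    Real.sqrt_mul inner_self_nonneg, ← norm_eq_sqrt_re_inner (𝕜 := ℂ),
    ← norm_eq_sqrt_re_inner (𝕜 := ℂ)]
  calc ‖inner ℂ x y‖ = ‖(inner ℂ x y : ℂ)‖ := rfl
    _ ≤ ‖x‖ * ‖y‖ := norm_inner_le_norm x y
    _ = ‖y‖ * ‖x‖ := mul_comm _ _

/-- Trace-distance lower bound for the two post-measurement 2×2 states. Here the
index `i ∈ {0,1}` is encoded as `false`/`true`. -/
theorem stmt_7 {d : ℕ} (δ : ℝ) (hδ : 0 ≤ δ)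
    (φ φ' : Fin d → ℂ) (hφ : star φ ⬝ᵥ φ = 1) (hφ' : star φ' ⬝ᵥ φ' = 1)
    (N : Bool × Bool → Matrix (Fin d) (Fin d) ℂ)
    (hN : ∀ p, (N p).PosSemidef)
    (hNsum : ∑ p : Bool × Bool, N p = 1)
    (hsmall : ∀ x : Bool,
      (star φ ⬝ᵥ (N (true, x)).mulVec φ).re *
        (star φ' ⬝ᵥ (N (true, x)).mulVec φ').re ≤ δ / 2) :
    traceDist
      !![(1/2 : ℂ), ∑ x : Bool, star φ' ⬝ᵥ (N (false, x)).mulVec φ;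
         (starRingEnd ℂ) (∑ x : Bool, star φ' ⬝ᵥ (N (false, x)).mulVec φ), (1/2 : ℂ)]
      !![(1/2 : ℂ), ∑ x : Bool, star φ' ⬝ᵥ (N (true, x)).mulVec φ;
         (starRingEnd ℂ) (∑ x : Bool, star φ' ⬝ᵥ (N (true, x)).mulVec φ), (1/2 : ℂ)]
      ≥ ‖star φ' ⬝ᵥ φ‖ - 2 * Real.sqrt (2 * δ) := by
  set c₀ : ℂ := ∑ x : Bool, star φ' ⬝ᵥ (N (false, x)).mulVec φ with hc₀
  set c₁ : ℂ := ∑ x : Bool, star φ' ⬝ᵥ (N (true, x)).mulVec φ with hc₁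
  -- the difference matrix
  have hsub : (!![(1/2 : ℂ), c₀; (starRingEnd ℂ) c₀, (1/2 : ℂ)] -
      !![(1/2 : ℂ), c₁; (starRingEnd ℂ) c₁, (1/2 : ℂ)]) =
      !![0, c₀ - c₁; (starRingEnd ℂ) (c₀ - c₁), 0] := by
    ext i j; fin_cases i <;> fin_cases j <;> simp [Matrix.sub_apply, map_sub]
  have hdist : traceDist
      !![(1/2 : ℂ), c₀; (starRingEnd ℂ) c₀, (1/2 : ℂ)]
      !![(1/2 : ℂ), c₁; (starRingEnd ℂ) c₁, (1/2 : ℂ)] = ‖c₀ - c₁‖ := by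
    rw [traceDist, hsub, traceNorm_offdiag]; ring
  rw [hdist]
  -- sum identity
  have hsum : c₀ + c₁ = star φ' ⬝ᵥ φ := by
    have h2 : (∑ p : Bool × Bool, N p) *ᵥ φ = ∑ p : Bool × Bool, (N p) *ᵥ φ :=
      map_sum (Matrix.mulVec.addMonoidHomLeft φ) N Finset.univ
    have h1 : ∑ p : Bool × Bool, star φ' ⬝ᵥ (N p) *ᵥ φ = star φ' ⬝ᵥ φ := by
      have h0 : star φ' ⬝ᵥ ((∑ p : Bool × Bool, N p) *ᵥ φ) = star φ' ⬝ᵥ φ := by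
        rw [hNsum, Matrix.one_mulVec]
      rw [← h0, h2]
      simp only [dotProduct, Finset.sum_apply, Finset.mul_sum]
      exact Finset.sum_comm
    rw [← h1, Fintype.sum_prod_type, Fintype.sum_bool, hc₀, hc₁, add_comm]
  -- bound on |c₁|
  have hb : ‖c₁‖ ≤ Real.sqrt (2 * δ) := by
    have hterm : ∀ x : Bool, ‖star φ' ⬝ᵥ (N (true, x)).mulVec φ‖ ≤
        Real.sqrt (δ / 2) := by
      intro x
      refine le_trans (cs_psd _ (hN (true, x)) φ' φ) (Real.sqrt_le_sqrt (hsmall x))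
    calc ‖c₁‖ ≤ ∑ x : Bool, ‖star φ' ⬝ᵥ (N (true, x)).mulVec φ‖ :=
          norm_sum_le _ _
      _ ≤ ∑ _x : Bool, Real.sqrt (δ / 2) := Finset.sum_le_sum fun x _ => hterm x
      _ = 2 * Real.sqrt (δ / 2) := by rw [Fintype.sum_bool]; ring
      _ = Real.sqrt (2 * δ) := by
          rw [show (2 : ℝ) * δ = 2 ^ 2 * (δ / 2) by ring, Real.sqrt_mul (by positivity),
            Real.sqrt_sq (by norm_num)]
  -- combine
  have htri : ‖star φ' ⬝ᵥ φ‖ ≤ ‖c₀ - c₁‖ + 2 * ‖c₁‖ := by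
    rw [← hsum]
    calc ‖c₀ + c₁‖ = ‖(c₀ - c₁) + 2 * c₁‖ := by ring_nf
      _ ≤ ‖c₀ - c₁‖ + ‖2 * c₁‖ := norm_add_le _ _
      _ = ‖c₀ - c₁‖ + 2 * ‖c₁‖ := by rw [norm_mul, Complex.norm_two]
  have : 2 * ‖c₁‖ ≤ 2 * Real.sqrt (2 * δ) := by linarith
  linarith
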